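/- Let Π, Π̂ ∈ ℝ^{n×n} with Π invertible, let w ∈ ℝⁿ, ε > 0, and let φ : ℝⁿ → ℝ be differentiable, strictly convex and radially unbounded (φ(y) → ∞ as ‖y‖ → ∞). Suppose the matrix Π Π̂ᵀ + Π̂ Πᵀ is positive definite. Then the map u ↦ φ(Πu + w) attains its minimum at a unique point u*, and every continuously differentiable solution u : [0,∞) → ℝⁿ of the online approximate gradient dynamics u̇(t) = −ε Π̂ᵀ ∇φ(Πu(t) + w) converges to u* as t → ∞. -/

import Mathlib

open Matrix Filter Set Topology

lemma convexOn_grad_ineq {E : Type*} [NormedAddCommGroup E] [NormedSpace ℝ E]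
    {f : E → ℝ} (hf : ConvexOn ℝ Set.univ f) {x : E} {f' : E →L[ℝ] ℝ}
    (hd : HasFDerivAt f f' x) (y : E) : f x + f' (y - x) ≤ f y := by
  have key : f' (y - x) ≤ f y - f x := by
    set c : ℝ → E := fun t => x + t • (y - x) with hc
    have hcd : HasDerivAt c (y - x) 0 := by
      have h1 : HasDerivAt (fun t : ℝ => t • (y - x)) ((1:ℝ) • (y - x)) 0 :=
        (hasDerivAt_id 0).smul_const (y - x)
      simpa [hc] using h1.const_add x
    have hd' : HasFDerivAt f f' (c 0) := by simpa [hc] using hd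
    have hg : HasDerivAt (fun t => f (c t)) (f' (y - x)) 0 := hd'.comp_hasDerivAt 0 hcd
    have hslope := hasDerivAt_iff_tendsto_slope.mp hg
    have hmono : 𝓝[>] (0:ℝ) ≤ 𝓝[≠] 0 := nhdsWithin_mono 0 (fun t ht => ne_of_gt ht)
    refine le_of_tendsto (hslope.mono_left hmono) ?_
    filter_upwards [Ioc_mem_nhdsGT one_pos] with t ht
    have h0t : 0 < t := ht.1
    have hcv : f (c t) ≤ (1 - t) * f x + t * f y := by
      have h2 := hf.2 (Set.mem_univ x) (Set.mem_univ y)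
        (by linarith [ht.2] : (0:ℝ) ≤ 1 - t) h0t.le (by ring)
      calc f (c t) = f ((1-t) • x + t • y) := by rw [hc]; congr 1; module
        _ ≤ (1-t) * f x + t * f y := by simpa [smul_eq_mul] using h2
    have hc0 : c 0 = x := by simp [hc]
    rw [slope_def_field, hc0]
    rw [sub_zero, div_le_iff₀ h0t]
    linarith
  linarith

open scoped RealInnerProductSpace
set_option maxHeartbeats 2000000

/-- If `Π Π̂ᵀ + Π̂ Πᵀ ≻ 0`, `Π` is invertible, and `φ` is differentiable,
strictly convex and radially unbounded, then `u ↦ φ(Πu + w)` has a unique minimizer `u*`,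
and every continuously differentiable solution of the OAG dynamics
`u̇ = -ε Π̂ᵀ ∇φ(Πu + w)` on `[0, ∞)` converges to `u*`. -/
theorem stmt0 {n : ℕ} (P Phat : Matrix (Fin n) (Fin n) ℝ) (hP : IsUnit P.det)
    (w : EuclideanSpace ℝ (Fin n)) (ε : ℝ) (hε : 0 < ε)
    (φ : EuclideanSpace ℝ (Fin n) → ℝ)
    (hdiff : Differentiable ℝ φ)
    (hconv : StrictConvexOn ℝ Set.univ φ)
    (hrad : Tendsto φ (comap norm atTop) atTop)
    (hpd : (P * Phat.transpose + Phat * P.transpose).PosDef) :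
    ∃ ustar : EuclideanSpace ℝ (Fin n),
      (∀ u, φ (Matrix.toEuclideanLin P ustar + w) ≤ φ (Matrix.toEuclideanLin P u + w)) ∧
      (∀ u', (∀ u, φ (Matrix.toEuclideanLin P u' + w) ≤ φ (Matrix.toEuclideanLin P u + w)) →
        u' = ustar) ∧
      (∀ u : ℝ → EuclideanSpace ℝ (Fin n),
        ContDiffOn ℝ 1 u (Set.Ici 0) →
        (∀ t : ℝ, 0 ≤ t → HasDerivAt u
          (-(ε • Matrix.toEuclideanLin Phat.transpose
              (gradient φ (Matrix.toEuclideanLin P (u t) + w)))) t) →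
        Tendsto u atTop (nhds ustar)) := by
  classical
  rcases subsingleton_or_nontrivial (EuclideanSpace ℝ (Fin n)) with hsub | hnt
  · refine ⟨0, ?_, ?_, ?_⟩
    · intro u; rw [Subsingleton.elim u 0]
    · intro u' _; exact Subsingleton.elim u' 0
    · intro u _ _
      exact tendsto_const_nhds.congr fun t => (Subsingleton.elim (0 : EuclideanSpace ℝ (Fin n)) (u t))
  -- notation
  set ψ : EuclideanSpace ℝ (Fin n) → ℝ := fun x => φ (Matrix.toEuclideanLin P x + w) with hψdef
  set gr : EuclideanSpace ℝ (Fin n) → EuclideanSpace ℝ (Fin n) :=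
    fun x => gradient φ (Matrix.toEuclideanLin P x + w) with hgrdef
  set TAc : EuclideanSpace ℝ (Fin n) →L[ℝ] EuclideanSpace ℝ (Fin n) :=
    LinearMap.toContinuousLinearMap (Matrix.toEuclideanLin P) with hTAc
  have hTAc_apply : ∀ x, TAc x = Matrix.toEuclideanLin P x := fun x => rfl
  -- composition and identity for toEuclideanLin
  have hcompM : ∀ (M N : Matrix (Fin n) (Fin n) ℝ) x,
      Matrix.toEuclideanLin (M * N) x = Matrix.toEuclideanLin M (Matrix.toEuclideanLin N x) := by
    intro M N x
    simp [Matrix.toEuclideanLin_apply, Matrix.mulVec_mulVec]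
  have honeM : ∀ x : EuclideanSpace ℝ (Fin n),
      Matrix.toEuclideanLin (1 : Matrix (Fin n) (Fin n) ℝ) x = x := by
    intro x
    simp [Matrix.toEuclideanLin_apply, Matrix.one_mulVec]
  -- bijectivity
  have hli : Function.LeftInverse (Matrix.toEuclideanLin P⁻¹) (Matrix.toEuclideanLin P) := by
    intro x; rw [← hcompM, Matrix.nonsing_inv_mul P hP]; exact honeM x
  have hri : Function.RightInverse (Matrix.toEuclideanLin P⁻¹) (Matrix.toEuclideanLin P) := by
    intro x; rw [← hcompM, Matrix.mul_nonsing_inv P hP]; exact honeM x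
  have hbij : Function.Bijective (Matrix.toEuclideanLin P) := ⟨hli.injective, hri.surjective⟩
  -- continuity of ψ
  have hψcont : Continuous ψ := by
    exact hdiff.continuous.comp ((TAc.continuous).add continuous_const)
  -- coercivity of ψ
  have hψcoer : Tendsto ψ (cocompact (EuclideanSpace ℝ (Fin n))) atTop := by
    have hφcoc : Tendsto φ (cocompact (EuclideanSpace ℝ (Fin n))) atTop :=
      hrad.mono_left (Filter.tendsto_iff_comap.mp tendsto_norm_cocompact_atTop)
    have hmap : Tendsto (fun x => Matrix.toEuclideanLin P x + w)
        (cocompact (EuclideanSpace ℝ (Fin n))) (cocompact (EuclideanSpace ℝ (Fin n))) := by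
      have hH := ((LinearEquiv.ofBijective (Matrix.toEuclideanLin P)
        hbij).toContinuousLinearEquiv.toHomeomorph.trans
        (Homeomorph.addRight w)).map_cocompact.le
      exact Filter.Tendsto.congr (fun x => rfl) hH
    exact hφcoc.comp hmap
  -- existence of minimizer
  obtain ⟨ustar, hmin⟩ := hψcont.exists_forall_le hψcoer
  -- strict convexity of ψ
  have hψsc : StrictConvexOn ℝ Set.univ ψ := by
    refine ⟨convex_univ, ?_⟩
    intro x _ y _ hxy a b ha hb hab
    obtain rfl : b = 1 - a := by linarith
    have hne : Matrix.toEuclideanLin P x + w ≠ Matrix.toEuclideanLin P y + w := by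
      intro h
      exact hxy (hbij.1 (by simpa using h))
    have h2 := hconv.2 (Set.mem_univ (Matrix.toEuclideanLin P x + w))
      (Set.mem_univ (Matrix.toEuclideanLin P y + w)) hne ha hb hab
    have key : Matrix.toEuclideanLin P (a • x + (1 - a) • y) + w
        = a • (Matrix.toEuclideanLin P x + w) + (1 - a) • (Matrix.toEuclideanLin P y + w) := by
      rw [map_add, LinearMap.map_smul, LinearMap.map_smul]
      module
    calc ψ (a • x + (1 - a) • y)
        = φ (a • (Matrix.toEuclideanLin P x + w) + (1 - a) • (Matrix.toEuclideanLin P y + w)) := by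
          rw [hψdef]; simp only []; rw [key]
      _ < a • φ (Matrix.toEuclideanLin P x + w) + (1 - a) • φ (Matrix.toEuclideanLin P y + w) := h2
      _ = a • ψ x + (1 - a) • ψ y := rfl
  -- uniqueness of minimizer
  have huniq : ∀ u', (∀ z, ψ u' ≤ ψ z) → u' = ustar := by
    intro u' hu'
    by_contra hne
    have h2 := hψsc.2 (Set.mem_univ u') (Set.mem_univ ustar) hne
      (by norm_num : (0:ℝ) < 1/2) (by norm_num : (0:ℝ) < 1/2) (by norm_num)
    have hlt : ψ ((1/2 : ℝ) • u' + (1/2 : ℝ) • ustar) < ψ u' := by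
      have := hu' ustar
      have := hmin u'
      calc ψ ((1/2 : ℝ) • u' + (1/2 : ℝ) • ustar) < (1/2) * ψ u' + (1/2) * ψ ustar := by
            simpa [smul_eq_mul] using h2
        _ ≤ ψ u' := by linarith [hu' ustar, hmin u']
    exact absurd (hu' _) (not_le.mpr hlt)
  -- derivative of ψ
  have hfd : ∀ x, HasFDerivAt ψ
      ((InnerProductSpace.toDual ℝ (EuclideanSpace ℝ (Fin n)) (gr x)).comp TAc) x := by
    intro x
    have h1 : HasFDerivAt (fun z => Matrix.toEuclideanLin P z + w) TAc x :=
      TAc.hasFDerivAt.add_const w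
    have h2 : HasFDerivAt φ (InnerProductSpace.toDual ℝ (EuclideanSpace ℝ (Fin n)) (gr x))
        (Matrix.toEuclideanLin P x + w) :=
      ((hdiff _).hasGradientAt).hasFDerivAt
    exact h2.comp x h1
  -- critical point implies minimizer
  have hgr0 : ∀ x, gr x = 0 → ∀ z, ψ x ≤ ψ z := by
    intro x hx z
    have h0 : HasFDerivAt ψ (0 : EuclideanSpace ℝ (Fin n) →L[ℝ] ℝ) x := by
      have := hfd x
      rwa [hx, map_zero, ContinuousLinearMap.zero_comp] at this
    have := convexOn_grad_ineq hψsc.convexOn h0 z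
    simpa using this
  have hgr_ne : ∀ x, x ≠ ustar → gr x ≠ 0 := by
    intro x hx h0
    exact hx (huniq x (hgr0 x h0))
  -- positivity of the quadratic form
  have hq_pos : ∀ g : EuclideanSpace ℝ (Fin n), g ≠ 0 →
      0 < ⟪g, Matrix.toEuclideanLin P (Matrix.toEuclideanLin Phat.transpose g)⟫ := by
    intro g hg
    set a : Fin n → ℝ := WithLp.equiv 2 (Fin n → ℝ) g with ha
    have hane : a ≠ 0 := by
      intro h
      apply hg
      have := congrArg (WithLp.equiv 2 (Fin n → ℝ)).symm h
      simpa [ha] using this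
    have hP2 := hpd.dotProduct_mulVec_pos hane
    rw [star_trivial] at hP2
    have hkey : ⟪g, Matrix.toEuclideanLin P (Matrix.toEuclideanLin Phat.transpose g)⟫
        = a ⬝ᵥ ((P * Phat.transpose) *ᵥ a) := by
      rw [← hcompM, Matrix.toEuclideanLin_apply]
      simp [PiLp.inner_apply, RCLike.inner_apply, dotProduct, ha, mul_comm]
    have hsym : a ⬝ᵥ ((Phat * P.transpose) *ᵥ a) = a ⬝ᵥ ((P * Phat.transpose) *ᵥ a) := by
      have h1 : Phat * P.transpose = (P * Phat.transpose).transpose := by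
        rw [Matrix.transpose_mul, Matrix.transpose_transpose]
      rw [h1, Matrix.mulVec_transpose, dotProduct_comm, ← dotProduct_mulVec]
    have hexp : a ⬝ᵥ (((P * Phat.transpose) + (Phat * P.transpose)) *ᵥ a)
        = a ⬝ᵥ ((P * Phat.transpose) *ᵥ a) + a ⬝ᵥ ((Phat * P.transpose) *ᵥ a) := by
      rw [Matrix.add_mulVec, dotProduct_add]
    rw [hexp, hsym] at hP2
    rw [hkey]
    linarith
  -- the three conclusions
  refine ⟨ustar, fun u => hmin u, fun u' h => huniq u' h, ?_⟩
  intro u hu1 hu2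
  set W : EuclideanSpace ℝ (Fin n) → ℝ :=
    fun x => ε * ⟪gr x, Matrix.toEuclideanLin P (Matrix.toEuclideanLin Phat.transpose (gr x))⟫
    with hWdef
  have hW' : ∀ t : ℝ, 0 ≤ t → HasDerivAt (fun s => ψ (u s)) (-(W (u t))) t := by
    intro t ht
    have hD := hu2 t ht
    have hy : HasDerivAt (fun s => Matrix.toEuclideanLin P (u s) + w)
        (Matrix.toEuclideanLin P (-(ε • Matrix.toEuclideanLin Phat.transpose (gr (u t))))) t := by
      exact (TAc.hasFDerivAt.comp_hasDerivAt t hD).add_const w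
    have hφd : HasFDerivAt φ (InnerProductSpace.toDual ℝ (EuclideanSpace ℝ (Fin n)) (gr (u t)))
        (Matrix.toEuclideanLin P (u t) + w) := ((hdiff _).hasGradientAt).hasFDerivAt
    have hcompd := hφd.comp_hasDerivAt t hy
    have hval : (InnerProductSpace.toDual ℝ (EuclideanSpace ℝ (Fin n)) (gr (u t)))
        (Matrix.toEuclideanLin P (-(ε • Matrix.toEuclideanLin Phat.transpose (gr (u t)))))
        = -(W (u t)) := by
      rw [InnerProductSpace.toDual_apply_apply, map_neg, LinearMap.map_smul, inner_neg_right,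
        real_inner_smul_right, hWdef]
    rw [hval] at hcompd
    exact hcompd
  have hψu_cont : ContinuousOn (fun t => ψ (u t)) (Set.Ici (0:ℝ)) :=
    hψcont.comp_continuousOn hu1.continuousOn
  have hWnonneg : ∀ x, 0 ≤ W x := by
    intro x
    rcases eq_or_ne (gr x) 0 with h | h
    · rw [hWdef]; simp only []; rw [h]; simp
    · exact le_of_lt (mul_pos hε (hq_pos _ h))
  have hanti : AntitoneOn (fun t => ψ (u t)) (Set.Ici (0:ℝ)) := by
    apply antitoneOn_of_deriv_nonpos (convex_Ici 0) hψu_cont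
    · intro t ht
      rw [interior_Ici] at ht
      exact ((hW' t (le_of_lt ht)).differentiableAt).differentiableWithinAt
    · intro t ht
      rw [interior_Ici] at ht
      rw [(hW' t (le_of_lt ht)).deriv]
      linarith [hWnonneg (u t)]
  set F : ℝ → ℝ := fun t => ψ (u (max t 0)) with hFdef
  have hFanti : Antitone F := by
    intro s t hst
    exact hanti (Set.mem_Ici.mpr (le_max_right s 0)) (Set.mem_Ici.mpr (le_max_right t 0))
      (max_le_max hst le_rfl)
  have hbddF : BddBelow (Set.range F) := by
    refine ⟨ψ ustar, ?_⟩
    rintro z ⟨t, rfl⟩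
    exact hmin _
  set L : ℝ := ⨅ t : ℝ, F t with hLdef
  have hFL : Tendsto F atTop (𝓝 L) := tendsto_atTop_ciInf hFanti hbddF
  have hUL : Tendsto (fun t => ψ (u t)) atTop (𝓝 L) := by
    refine hFL.congr' ?_
    filter_upwards [eventually_ge_atTop (0:ℝ)] with t ht
    rw [hFdef]; simp only []; rw [max_eq_left ht]
  have hLle : ∀ t, 0 ≤ t → L ≤ ψ (u t) := by
    intro t ht
    have h1 : L ≤ F t := ciInf_le hbddF t
    simpa [hFdef, max_eq_left ht] using h1
  have hLge : ψ ustar ≤ L := le_ciInf fun t => hmin _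
  have hK0cpt : IsCompact {x | ψ x ≤ ψ (u 0)} := by
    obtain ⟨C, hC, hCsub⟩ := mem_cocompact.mp (hψcoer (Ioi_mem_atTop (ψ (u 0))))
    refine hC.of_isClosed_subset (isClosed_le hψcont continuous_const) ?_
    intro x hx
    by_contra hxC
    exact absurd (hCsub hxC) (by simpa using hx)
  have hL : L = ψ ustar := by
    by_contra hne
    have hgt : ψ ustar < L := lt_of_le_of_ne hLge (Ne.symm hne)
    set K : Set (EuclideanSpace ℝ (Fin n)) := {x | L ≤ ψ x ∧ ψ x ≤ ψ (u 0)} with hKdef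
    have hKcpt : IsCompact K := by
      refine hK0cpt.of_isClosed_subset ?_ ?_
      · exact (isClosed_le continuous_const hψcont).inter (isClosed_le hψcont continuous_const)
      · intro x hx; exact hx.2
    have htraj : ∀ t, 0 ≤ t → u t ∈ K := by
      intro t ht
      exact ⟨hLle t ht, hanti Set.self_mem_Ici (Set.mem_Ici.mpr ht) ht⟩
    have hKne : K.Nonempty := ⟨u 0, htraj 0 le_rfl⟩
    obtain ⟨xM, hxMK, hxM⟩ := hKcpt.exists_isMaxOn hKne
      ((continuous_norm.comp ((TAc.continuous.add continuous_const).sub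
        continuous_const)).continuousOn :
        ContinuousOn (fun x => ‖(Matrix.toEuclideanLin P x + w)
          - (Matrix.toEuclideanLin P ustar + w)‖) K)
    set Mb : ℝ := ‖(Matrix.toEuclideanLin P xM + w) - (Matrix.toEuclideanLin P ustar + w)‖ + 1
      with hMbdef
    have hMbpos : 0 < Mb := by positivity
    set c : ℝ := L - ψ ustar with hcdef
    have hcpos : 0 < c := by rw [hcdef]; linarith
    have hglb : ∀ t, 0 ≤ t → c / Mb ≤ ‖gr (u t)‖ := by
      intro t ht
      have hK := htraj t ht
      have hconv1 := convexOn_grad_ineq hconv.convexOn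
        (((hdiff _).hasGradientAt).hasFDerivAt :
          HasFDerivAt φ (InnerProductSpace.toDual ℝ _ (gr (u t)))
            (Matrix.toEuclideanLin P (u t) + w))
        (Matrix.toEuclideanLin P ustar + w)
      rw [InnerProductSpace.toDual_apply_apply] at hconv1
      have hflip : ⟪gr (u t), (Matrix.toEuclideanLin P (u t) + w)
          - (Matrix.toEuclideanLin P ustar + w)⟫
          = -⟪gr (u t), (Matrix.toEuclideanLin P ustar + w)
            - (Matrix.toEuclideanLin P (u t) + w)⟫ := by
        rw [← inner_neg_right, neg_sub]
      have h1 : c ≤ ⟪gr (u t), (Matrix.toEuclideanLin P (u t) + w)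
          - (Matrix.toEuclideanLin P ustar + w)⟫ := by
        have h2 := hLle t ht
        rw [hflip]
        have : ψ (u t) + ⟪gr (u t), (Matrix.toEuclideanLin P ustar + w)
            - (Matrix.toEuclideanLin P (u t) + w)⟫ ≤ ψ ustar := hconv1
        rw [hcdef]
        linarith
      have h3 := real_inner_le_norm (gr (u t)) ((Matrix.toEuclideanLin P (u t) + w)
        - (Matrix.toEuclideanLin P ustar + w))
      have h4 : ‖(Matrix.toEuclideanLin P (u t) + w) - (Matrix.toEuclideanLin P ustar + w)‖
          ≤ Mb := by
        have h6 := hxM hK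
        simp only [Function.comp_apply, Pi.sub_apply, Pi.add_apply, hTAc_apply, Set.mem_setOf_eq] at h6
        rw [hMbdef]
        linarith
      have h5 : c ≤ ‖gr (u t)‖ * Mb := by
        calc c ≤ ⟪gr (u t), (Matrix.toEuclideanLin P (u t) + w)
              - (Matrix.toEuclideanLin P ustar + w)⟫ := h1
          _ ≤ ‖gr (u t)‖ * ‖(Matrix.toEuclideanLin P (u t) + w)
              - (Matrix.toEuclideanLin P ustar + w)‖ := h3
          _ ≤ ‖gr (u t)‖ * Mb := mul_le_mul_of_nonneg_left h4 (norm_nonneg _)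
      rw [div_le_iff₀ hMbpos]
      linarith
    obtain ⟨v1, hv1⟩ : (Metric.sphere (0 : EuclideanSpace ℝ (Fin n)) 1).Nonempty :=
      NormedSpace.sphere_nonempty.mpr zero_le_one
    set q : EuclideanSpace ℝ (Fin n) → ℝ :=
      fun g => ε * ⟪g, Matrix.toEuclideanLin P (Matrix.toEuclideanLin Phat.transpose g)⟫
      with hqdef
    have hqcont : Continuous q := by
      apply continuous_const.mul
      exact Continuous.inner continuous_id
        ((TAc.comp (LinearMap.toContinuousLinearMap
          (Matrix.toEuclideanLin Phat.transpose))).continuous)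
    obtain ⟨vm, hvmS, hvm⟩ := (isCompact_sphere (0:EuclideanSpace ℝ (Fin n)) 1).exists_isMinOn
      ⟨v1, hv1⟩ hqcont.continuousOn
    have hvm_ne : vm ≠ 0 := by
      intro h
      rw [h, mem_sphere_zero_iff_norm] at hvmS
      simp at hvmS
    set μ : ℝ := q vm with hμdef
    have hμpos : 0 < μ := mul_pos hε (hq_pos vm hvm_ne)
    have hscale : ∀ g : EuclideanSpace ℝ (Fin n), g ≠ 0 → μ * ‖g‖^2 ≤ q g := by
      intro g hg
      have hunit : ‖g‖⁻¹ • g ∈ Metric.sphere (0:EuclideanSpace ℝ (Fin n)) 1 := by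
        rw [mem_sphere_zero_iff_norm]
        rw [norm_smul]
        rw [norm_inv, norm_norm]
        field_simp [norm_ne_zero_iff.mpr hg]
      have hq1 : μ ≤ q (‖g‖⁻¹ • g) := hvm hunit
      have hgpos : 0 < ‖g‖ := norm_pos_iff.mpr hg
      have hqg : q (‖g‖⁻¹ • g) = (‖g‖⁻¹)^2 * q g := by
        rw [hqdef]; simp only []
        rw [LinearMap.map_smul, LinearMap.map_smul, real_inner_smul_left, real_inner_smul_right]
        ring
      rw [hqg] at hq1
      have h2 : μ * ‖g‖^2 ≤ ((‖g‖⁻¹)^2 * q g) * ‖g‖^2 :=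
        mul_le_mul_of_nonneg_right hq1 (sq_nonneg _)
      calc μ * ‖g‖^2 ≤ ((‖g‖⁻¹)^2 * q g) * ‖g‖^2 := h2
        _ = q g := by field_simp
    set δ : ℝ := μ * (c / Mb)^2 with hδdef
    have hδpos : 0 < δ := mul_pos hμpos (pow_pos (div_pos hcpos hMbpos) 2)
    have hWlb : ∀ t, 0 ≤ t → δ ≤ W (u t) := by
      intro t ht
      have hgne : gr (u t) ≠ 0 := by
        intro h
        have h0 : ‖gr (u t)‖ = 0 := by rw [h]; simp
        have h1 := hglb t ht
        rw [h0] at h1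
        exact absurd h1 (not_le.mpr (div_pos hcpos hMbpos))
      have h1 := hscale (gr (u t)) hgne
      have h2 : (c / Mb)^2 ≤ ‖gr (u t)‖^2 :=
        pow_le_pow_left₀ (le_of_lt (div_pos hcpos hMbpos)) (hglb t ht) 2
      have h3 : δ ≤ μ * ‖gr (u t)‖^2 := by
        rw [hδdef]; exact mul_le_mul_of_nonneg_left h2 (le_of_lt hμpos)
      exact le_trans h3 h1
    have hG' : ∀ t : ℝ, 0 ≤ t → HasDerivAt (fun s => ψ (u s) + δ * s) (-(W (u t)) + δ) t := by
      intro t ht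
      have h2 : HasDerivAt (fun s : ℝ => δ * s) δ t := by
        simpa using (hasDerivAt_id t).const_mul δ
      exact (hW' t ht).add h2
    have hGanti : AntitoneOn (fun s => ψ (u s) + δ * s) (Set.Ici (0:ℝ)) := by
      apply antitoneOn_of_deriv_nonpos (convex_Ici 0)
      · exact hψu_cont.add (continuous_const.mul continuous_id).continuousOn
      · intro t ht; rw [interior_Ici] at ht
        exact ((hG' t (le_of_lt ht)).differentiableAt).differentiableWithinAt
      · intro t ht; rw [interior_Ici] at ht
        rw [(hG' t (le_of_lt ht)).deriv]
        linarith [hWlb t (le_of_lt ht)]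
    set T : ℝ := (ψ (u 0) - ψ ustar) / δ + 1 with hTdef
    have hT0 : (0:ℝ) ≤ T := by
      rw [hTdef]
      have : 0 ≤ (ψ (u 0) - ψ ustar) / δ := div_nonneg (by linarith [hmin (u 0)]) (le_of_lt hδpos)
      linarith
    have hcontr := hGanti Set.self_mem_Ici (Set.mem_Ici.mpr hT0) hT0
    have hδT : δ * T = ψ (u 0) - ψ ustar + δ := by
      rw [hTdef]; field_simp
    simp only [] at hcontr
    rw [hδT] at hcontr
    have := hmin (u T)
    linarith
  rw [hL] at hUL
  rw [Metric.tendsto_nhds]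
  intro r hr
  set K' : Set (EuclideanSpace ℝ (Fin n)) :=
    {x | ψ x ≤ ψ (u 0)} ∩ {x | r ≤ dist x ustar} with hK'def
  have hK'cpt : IsCompact K' := hK0cpt.of_isClosed_subset
    ((isClosed_le hψcont continuous_const).inter
      (isClosed_le continuous_const (continuous_id.dist continuous_const)))
    (fun x hx => hx.1)
  rcases Set.eq_empty_or_nonempty K' with hKe | hKne
  · filter_upwards [eventually_ge_atTop (0:ℝ)] with t ht
    by_contra hge
    push_neg at hge
    have hmem : u t ∈ K' := ⟨hanti Set.self_mem_Ici (Set.mem_Ici.mpr ht) ht, hge⟩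
    rw [hKe] at hmem
    exact hmem
  · obtain ⟨xm, hxmK, hxm⟩ := hK'cpt.exists_isMinOn hKne hψcont.continuousOn
    have hxm_ne : xm ≠ ustar := by
      intro h
      have h2 := hxmK.2
      rw [h] at h2
      simp only [Set.mem_setOf_eq, dist_self] at h2
      linarith
    have hm_gt : ψ ustar < ψ xm := by
      rcases lt_or_ge (ψ ustar) (ψ xm) with h | h
      · exact h
      · exfalso
        apply hxm_ne
        apply huniq
        intro z
        exact le_trans h (hmin z)
    filter_upwards [eventually_ge_atTop (0:ℝ), hUL.eventually_lt_const hm_gt] with t ht hlt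
    by_contra hge
    push_neg at hge
    have hmem : u t ∈ K' := ⟨hanti Set.self_mem_Ici (Set.mem_Ici.mpr ht) ht, hge⟩
    exact absurd (hxm hmem) (not_le.mpr hlt)
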